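/- Let p ≥ 1 be a real number. For integrable functions f, g : ℝ → ℝ define D_N(f,g) = ((∫ (f−g)⁺ dx)^p + (∫ (f−g)⁻ dx)^p)^(1/p) / ∫ max(|f|, |g|, |f−g|) dx when ∫ max(|f|, |g|, |f−g|) dx > 0, and D_N(f,g) = 0 otherwise. Then D_N satisfies the triangle inequality: for all integrable f, g, h : ℝ → ℝ, D_N(f,h) ≤ D_N(f,g) + D_N(g,h). -/

import Mathlib

open MeasureTheory

/-- The unnormalized distance on integrable functions:
`D(f,g) = ((∫ (f−g)⁺)^p + (∫ (f−g)⁻)^p)^(1/p)`. -/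
noncomputable def funD (p : ℝ) (f g : ℝ → ℝ) : ℝ :=
  ((∫ x, max (f x - g x) 0) ^ p + (∫ x, max (g x - f x) 0) ^ p) ^ (1 / p)

/-- The normalized distance on integrable functions:
`D_N(f,g) = D(f,g) / ∫ max(|f|, |g|, |f−g|)` when the denominator is positive,
and `0` otherwise. -/
noncomputable def funDN (p : ℝ) (f g : ℝ → ℝ) : ℝ :=
  if 0 < ∫ x, max |f x| (max |g x| |f x - g x|) then
    funD p f g / ∫ x, max |f x| (max |g x| |f x - g x|)
  else 0

lemma vertexIneq (dxy dyz dxz Nx Ny Nz : ℝ)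
    (h1 : dxz ≤ dxy + dyz) (h2 : dxy ≤ dxz + dyz) (h3 : dyz ≤ dxy + dxz)
    (h6 : dxz ≤ Nx + Nz)
    (h7 : Nx ≤ Ny + dxy) (h8 : Ny ≤ Nx + dxy) (h9 : Ny ≤ Nz + dyz) (h10 : Nz ≤ Ny + dyz)
    (hd3 : 0 ≤ dxz) :
    2*dxz*((Nx+Ny+dxy)*(Ny+Nz+dyz)) ≤
      2*dxy*((Ny+Nz+dyz)*(Nx+Nz+dxz)) + (dyz+dxz-dxy)*((Nx+Ny+dxy)*(Nx+Nz+dxz)) := by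
  have hp : 0 ≤ Nz + dyz - Ny := by linarith
  have hq : 0 ≤ Nx + dxy - Ny := by linarith
  have hr : 0 ≤ Nx + Nz - dxz := by linarith
  have hqp : 0 ≤ dxy + Ny - Nx := by linarith
  have hc0 : 0 ≤ dxy + dxz - dyz := by linarith
  have hc1 : 0 ≤ dyz + dxz - dxy := by linarith
  have hc2 : 0 ≤ dxy + dyz - dxz := by linarith
  rcases le_total dxy dxz with hc | hc
  · nlinarith [mul_nonneg (mul_nonneg hc2 hr) hr,
      mul_nonneg (mul_nonneg hr hp) hc0,
      mul_nonneg (mul_nonneg hq hr) (sub_nonneg.2 hc),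
      mul_nonneg (mul_nonneg hr (by linarith : (0:ℝ) ≤ dxy + dyz + dxz)) hc2,
      mul_nonneg (mul_nonneg hd3 hq) hc1,
      mul_nonneg (mul_nonneg hd3 hp) hqp]
  · nlinarith [mul_nonneg (mul_nonneg hc2 hr) hr,
      mul_nonneg (mul_nonneg (sub_nonneg.2 hc) hqp) hr,
      mul_nonneg (mul_nonneg hc0 hp) hr,
      mul_nonneg (mul_nonneg hd3 hp) hqp,
      mul_nonneg (mul_nonneg hd3 hc1) hq,
      mul_nonneg (mul_nonneg hc1 hr) (by linarith : (0:ℝ) ≤ 2*dxy + (dxy + dyz - dxz))]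

lemma abstractKey (dxy dyz dxz ta tb U V W : ℝ)
    (h1 : dxz ≤ dxy + dyz) (h2 : dxy ≤ dxz + dyz) (h3 : dyz ≤ dxy + dxz)
    (hta1 : -dxy ≤ ta) (hta2 : ta ≤ dxy) (htb1 : -dyz ≤ tb) (htb2 : tb ≤ dyz)
    (htab2 : ta + tb ≤ dxz)
    (hU : 0 < U) (hV : 0 < V) (hW : 0 < W)
    (hU2 : 2*dxy ≤ U) (hV2 : 2*dyz ≤ V) (hW2 : 2*dxz ≤ W)
    (hUW : U - W ≤ dxy + dyz - dxz) (hVW : V - W ≤ dxy + dyz - dxz)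
    (hF1 : 2*dxz*(U*V) ≤ 2*dxy*(V*W) + (dyz+dxz-dxy)*(U*W))
    (hF2 : 2*dxz*(U*V) ≤ 2*dyz*(U*W) + (dxy+dxz-dyz)*(V*W)) :
    (dxz + (ta + tb)) / W ≤ (dxy + ta) / U + (dyz + tb) / V := by
  rw [div_add_div _ _ (ne_of_gt hU) (ne_of_gt hV), div_le_div_iff₀ hW (mul_pos hU hV)]
  rcases le_total W U with hWU | hWU
  · rcases le_total W V with hWV | hWV
    · rcases le_total (V * (W - U)) (U * (W - V)) with hab | hab
      · have hQ1 : 0 ≤ (dxz - (ta + tb)) * (U * (V - W)) :=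
          mul_nonneg (by linarith) (mul_nonneg hU.le (by linarith))
        have hQ2 : 0 ≤ (dxy - ta) * (U * (W - V) - V * (W - U)) :=
          mul_nonneg (by linarith) (by linarith)
        nlinarith [hQ1, hQ2, hF1]
      · have hQ1 : 0 ≤ (dxz - (ta + tb)) * (V * (U - W)) :=
          mul_nonneg (by linarith) (mul_nonneg hV.le (by linarith))
        have hQ2 : 0 ≤ (dyz - tb) * (V * (W - U) - U * (W - V)) :=
          mul_nonneg (by linarith) (by linarith)
        nlinarith [hQ1, hQ2, hF2]
    · nlinarith [mul_nonneg (by linarith : (0:ℝ) ≤ dyz + tb) (mul_nonneg hU.le (by linarith : (0:ℝ) ≤ W - V)),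
        mul_nonneg (by linarith : (0:ℝ) ≤ dxy - ta) (mul_nonneg hV.le (by linarith : (0:ℝ) ≤ U - W)),
        mul_nonneg (mul_nonneg (by linarith : (0:ℝ) ≤ dxy) hV.le) (by linarith : (0:ℝ) ≤ W - U + (dxy + dyz - dxz)),
        mul_nonneg (mul_nonneg (by linarith : (0:ℝ) ≤ dxy + dyz - dxz) hV.le) (by linarith : (0:ℝ) ≤ U - 2*dxy)]
  · rcases le_total W V with hWV | hWV
    · nlinarith [mul_nonneg (by linarith : (0:ℝ) ≤ dxy + ta) (mul_nonneg hV.le (by linarith : (0:ℝ) ≤ W - U)),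
        mul_nonneg (by linarith : (0:ℝ) ≤ dyz - tb) (mul_nonneg hU.le (by linarith : (0:ℝ) ≤ V - W)),
        mul_nonneg (mul_nonneg (by linarith : (0:ℝ) ≤ dyz) hU.le) (by linarith : (0:ℝ) ≤ W - V + (dxy + dyz - dxz)),
        mul_nonneg (mul_nonneg (by linarith : (0:ℝ) ≤ dxy + dyz - dxz) hU.le) (by linarith : (0:ℝ) ≤ V - 2*dyz)]
    · nlinarith [mul_nonneg (by linarith : (0:ℝ) ≤ dxy + ta) (mul_nonneg hV.le (by linarith : (0:ℝ) ≤ W - U)),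
        mul_nonneg (by linarith : (0:ℝ) ≤ dyz + tb) (mul_nonneg hU.le (by linarith : (0:ℝ) ≤ W - V)),
        mul_nonneg (mul_nonneg (by linarith : (0:ℝ) ≤ dxy + dyz - dxz) hU.le) hV.le]

lemma keyIneq (dxy dyz dxz Nx Ny Nz ta tb tc : ℝ) (htc : tc = ta + tb)
    (h1 : dxz ≤ dxy + dyz) (h2 : dxy ≤ dxz + dyz) (h3 : dyz ≤ dxy + dxz)
    (h4 : dxy ≤ Nx + Ny) (h5 : dyz ≤ Ny + Nz) (h6 : dxz ≤ Nx + Nz)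
    (h7 : Nx ≤ Ny + dxy) (h8 : Ny ≤ Nx + dxy) (h9 : Ny ≤ Nz + dyz) (h10 : Nz ≤ Ny + dyz)
    (hta1 : -dxy ≤ ta) (hta2 : ta ≤ dxy) (htb1 : -dyz ≤ tb) (htb2 : tb ≤ dyz)
    (htab2 : tc ≤ dxz)
    (hU : 0 < (Nx + Ny + dxy)/2) (hV : 0 < (Ny + Nz + dyz)/2) (hW : 0 < (Nx + Nz + dxz)/2) :
    ((dxz + tc)/2) / ((Nx + Nz + dxz)/2) ≤
      ((dxy + ta)/2) / ((Nx + Ny + dxy)/2) + ((dyz + tb)/2) / ((Ny + Nz + dyz)/2) := by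
  subst htc
  have e : ∀ x y : ℝ, y ≠ 0 → (x/2)/(y/2) = x/y := by
    intro x y hy; field_simp
  have hU' : (0:ℝ) < Nx + Ny + dxy := by linarith
  have hV' : (0:ℝ) < Ny + Nz + dyz := by linarith
  have hW' : (0:ℝ) < Nx + Nz + dxz := by linarith
  rw [e _ _ (ne_of_gt hU'), e _ _ (ne_of_gt hV'), e _ _ (ne_of_gt hW')]
  have hd3 : (0:ℝ) ≤ dxz := by linarith
  have hF1 := vertexIneq dxy dyz dxz Nx Ny Nz h1 h2 h3 h6 h7 h8 h9 h10 hd3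
  have hF2 := vertexIneq dyz dxy dxz Nz Ny Nx (by linarith) (by linarith) (by linarith)
    (by linarith) h10 h9 h8 h7 hd3
  exact abstractKey dxy dyz dxz ta tb _ _ _ h1 h2 h3 hta1 hta2 htb1 htb2 htab2 hU' hV' hW'
    (by linarith) (by linarith) (by linarith) (by linarith) (by linarith)
    (by linarith [hF1]) (by nlinarith [hF2])

lemma normDiv (p : ℝ) (hp : 1 ≤ p) (A1 A2 B1 B2 C1 C2 U V W : ℝ)
    (hA1 : 0 ≤ A1) (hA2 : 0 ≤ A2) (hB1 : 0 ≤ B1) (hB2 : 0 ≤ B2) (hC1 : 0 ≤ C1) (hC2 : 0 ≤ C2)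
    (hU : 0 < U) (hV : 0 < V) (hW : 0 < W)
    (e1 : A1/W ≤ B1/U + C1/V) (e2 : A2/W ≤ B2/U + C2/V) :
    (A1^p + A2^p)^(1/p) / W ≤ (B1^p + B2^p)^(1/p)/U + (C1^p + C2^p)^(1/p)/V := by
  have hp0 : (0:ℝ) < p := lt_of_lt_of_le one_pos hp
  have scale : ∀ X1 X2 M : ℝ, 0 ≤ X1 → 0 ≤ X2 → 0 < M →
      (X1^p + X2^p)^(1/p) / M = ((X1/M)^p + (X2/M)^p)^(1/p) := by
    intro X1 X2 M h1 h2 hM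
    rw [Real.div_rpow h1 hM.le, Real.div_rpow h2 hM.le, ← add_div,
      Real.div_rpow (by positivity) (by positivity)]
    congr 1
    rw [← Real.rpow_mul hM.le, mul_one_div, div_self (ne_of_gt hp0), Real.rpow_one]
  rw [scale A1 A2 W hA1 hA2 hW, scale B1 B2 U hB1 hB2 hU, scale C1 C2 V hC1 hC2 hV]
  have m1 : (A1/W)^p ≤ (B1/U + C1/V)^p :=
    Real.rpow_le_rpow (by positivity) e1 hp0.le
  have m2 : (A2/W)^p ≤ (B2/U + C2/V)^p :=
    Real.rpow_le_rpow (by positivity) e2 hp0.le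
  have step1 : ((A1/W)^p + (A2/W)^p)^(1/p) ≤ ((B1/U + C1/V)^p + (B2/U + C2/V)^p)^(1/p) :=
    Real.rpow_le_rpow (by positivity) (add_le_add m1 m2) (by positivity)
  refine le_trans step1 ?_
  have mink := Real.Lp_add_le_of_nonneg (s := (Finset.univ : Finset (Fin 2)))
    (f := ![B1/U, B2/U]) (g := ![C1/V, C2/V]) (p := p) hp
    (by intro i _; fin_cases i <;> simp <;> positivity)
    (by intro i _; fin_cases i <;> simp <;> positivity)
  simpa [Fin.sum_univ_two] using mink

lemma max_abs_eq (a b : ℝ) : max |a| (max |b| |a - b|) = (|a| + |b| + |a - b|) / 2 := by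
  rcases abs_cases a with ⟨h1, s1⟩ | ⟨h1, s1⟩ <;>
  rcases abs_cases b with ⟨h2, s2⟩ | ⟨h2, s2⟩ <;>
  rcases abs_cases (a - b) with ⟨h3, s3⟩ | ⟨h3, s3⟩ <;>
  simp only [max_def] <;> split_ifs <;> linarith

lemma max_zero_eq (a : ℝ) : max a 0 = (|a| + a) / 2 := by
  rcases abs_cases a with ⟨h1, s1⟩ | ⟨h1, s1⟩ <;>
  simp only [max_def] <;> split_ifs <;> linarith

lemma intM (f g : ℝ → ℝ) (hf : Integrable f) (hg : Integrable g) :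
    (∫ x, max |f x| (max |g x| |f x - g x|)) =
      ((∫ x, |f x|) + (∫ x, |g x|) + (∫ x, |f x - g x|)) / 2 := by
  have e : (fun x => max |f x| (max |g x| |f x - g x|)) =
      fun x => (|f x| + |g x| + |f x - g x|) / 2 := funext fun x => max_abs_eq _ _
  have i1 : Integrable (fun x => |f x|) := hf.abs
  have i2 : Integrable (fun x => |g x|) := hg.abs
  have i3 : Integrable (fun x => |f x - g x|) := (hf.sub hg).abs
  have i12 : Integrable (fun x => |f x| + |g x|) := i1.add i2
  rw [e, integral_div, integral_add i12 i3, integral_add i1 i2]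

lemma intPos (f g : ℝ → ℝ) (hf : Integrable f) (hg : Integrable g) :
    (∫ x, max (f x - g x) 0) =
      ((∫ x, |f x - g x|) + ((∫ x, f x) - ∫ x, g x)) / 2 := by
  have e : (fun x => max (f x - g x) 0) =
      fun x => (|f x - g x| + (f x - g x)) / 2 := funext fun x => max_zero_eq _
  have i3 : Integrable (fun x => |f x - g x|) := (hf.sub hg).abs
  have i4 : Integrable (fun x => f x - g x) := hf.sub hg
  rw [e, integral_div, integral_add i3 i4, integral_sub hf hg]

lemma eswap (u v : ℝ → ℝ) : (∫ x, |u x - v x|) = ∫ x, |v x - u x| := by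
  congr 1; funext x; exact abs_sub_comm _ _

lemma funDN_nonneg (p : ℝ) (f g : ℝ → ℝ) : 0 ≤ funDN p f g := by
  unfold funDN
  split_ifs with hpos
  · apply div_nonneg _ hpos.le
    have h1 : 0 ≤ ∫ x, max (f x - g x) 0 := integral_nonneg fun x => le_max_right _ _
    have h2 : 0 ≤ ∫ x, max (g x - f x) 0 := integral_nonneg fun x => le_max_right _ _
    exact Real.rpow_nonneg (add_nonneg (Real.rpow_nonneg h1 p) (Real.rpow_nonneg h2 p)) _
  · exact le_refl 0

lemma funDN_congr (p : ℝ) {f₁ f₂ g₁ g₂ : ℝ → ℝ} (hf : f₁ =ᵐ[volume] f₂)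
    (hg : g₁ =ᵐ[volume] g₂) : funDN p f₁ g₁ = funDN p f₂ g₂ := by
  have e1 : (∫ x, max (f₁ x - g₁ x) 0) = ∫ x, max (f₂ x - g₂ x) 0 :=
    integral_congr_ae (by filter_upwards [hf, hg] with x h1 h2; rw [h1, h2])
  have e2 : (∫ x, max (g₁ x - f₁ x) 0) = ∫ x, max (g₂ x - f₂ x) 0 :=
    integral_congr_ae (by filter_upwards [hf, hg] with x h1 h2; rw [h1, h2])
  have e3 : (∫ x, max |f₁ x| (max |g₁ x| |f₁ x - g₁ x|)) =
      ∫ x, max |f₂ x| (max |g₂ x| |f₂ x - g₂ x|) :=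
    integral_congr_ae (by filter_upwards [hf, hg] with x h1 h2; rw [h1, h2])
  unfold funDN funD
  rw [e1, e2, e3]

lemma ae_zero_of_int_abs_eq_zero {f : ℝ → ℝ} (hf : Integrable f)
    (h0 : (∫ x, |f x|) = 0) : f =ᵐ[volume] 0 := by
  have := (integral_eq_zero_iff_of_nonneg_ae
    (Filter.Eventually.of_forall fun x => abs_nonneg (f x)) hf.abs).mp h0
  filter_upwards [this] with x hx
  exact abs_eq_zero.mp hx

/-- For real `p ≥ 1`, the normalized distance `D_N` satisfies the triangle inequality
on Lebesgue integrable functions `ℝ → ℝ`. -/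
theorem funDN_triangle (p : ℝ) (hp : 1 ≤ p) (f g h : ℝ → ℝ)
    (hf : Integrable f) (hg : Integrable g) (hh : Integrable h) :
    funDN p f h ≤ funDN p f g + funDN p g h := by
  by_cases Hfh : 0 < ∫ x, max |f x| (max |h x| |f x - h x|)
  case neg =>
    have e0 : funDN p f h = 0 := by unfold funDN; exact if_neg Hfh
    rw [e0]
    exact add_nonneg (funDN_nonneg p f g) (funDN_nonneg p g h)
  have nNx : (0:ℝ) ≤ ∫ x, |f x| := integral_nonneg fun x => abs_nonneg _
  have nNy : (0:ℝ) ≤ ∫ x, |g x| := integral_nonneg fun x => abs_nonneg _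
  have nNz : (0:ℝ) ≤ ∫ x, |h x| := integral_nonneg fun x => abs_nonneg _
  have ndxy : (0:ℝ) ≤ ∫ x, |f x - g x| := integral_nonneg fun x => abs_nonneg _
  by_cases Hfg : 0 < ∫ x, max |f x| (max |g x| |f x - g x|)
  case neg =>
    have hMfg := intM f g hf hg
    have hle : ((∫ x, |f x|) + (∫ x, |g x|) + (∫ x, |f x - g x|)) / 2 ≤ 0 := by
      rw [← hMfg]; exact not_lt.1 Hfg
    have f0 := ae_zero_of_int_abs_eq_zero hf (by linarith)
    have g0 := ae_zero_of_int_abs_eq_zero hg (by linarith)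
    have hae : f =ᵐ[volume] g := f0.trans g0.symm
    rw [funDN_congr p hae (Filter.EventuallyEq.refl _ h)]
    have e0 : funDN p f g = 0 := by unfold funDN; exact if_neg Hfg
    rw [e0, zero_add]
  have nNy' : (0:ℝ) ≤ ∫ x, |g x - h x| := integral_nonneg fun x => abs_nonneg _
  by_cases Hgh : 0 < ∫ x, max |g x| (max |h x| |g x - h x|)
  case neg =>
    have hMgh := intM g h hg hh
    have hle : ((∫ x, |g x|) + (∫ x, |h x|) + (∫ x, |g x - h x|)) / 2 ≤ 0 := by
      rw [← hMgh]; exact not_lt.1 Hgh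
    have g0 := ae_zero_of_int_abs_eq_zero hg (by linarith)
    have h0 := ae_zero_of_int_abs_eq_zero hh (by linarith)
    have hae : h =ᵐ[volume] g := h0.trans g0.symm
    rw [funDN_congr p (Filter.EventuallyEq.refl _ f) hae]
    have e0 : funDN p g h = 0 := by unfold funDN; exact if_neg Hgh
    rw [e0, add_zero]
  -- main case
  have myabs : ∀ a b : ℝ, |a - b| ≤ |a| + |b| := by
    intro a b
    calc |a - b| = |a + -b| := by rw [sub_eq_add_neg]
    _ ≤ |a| + |-b| := abs_add_le _ _
    _ = |a| + |b| := by rw [abs_neg]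
  have ifg : Integrable (fun x => |f x - g x|) := (hf.sub hg).abs
  have igh : Integrable (fun x => |g x - h x|) := (hg.sub hh).abs
  have ifh : Integrable (fun x => |f x - h x|) := (hf.sub hh).abs
  have iNf : Integrable (fun x => |f x|) := hf.abs
  have iNg : Integrable (fun x => |g x|) := hg.abs
  have iNh : Integrable (fun x => |h x|) := hh.abs
  have tri1 : (∫ x, |f x - h x|) ≤ (∫ x, |f x - g x|) + (∫ x, |g x - h x|) := by
    have hle : (∫ x, |f x - h x|) ≤ ∫ x, (|f x - g x| + |g x - h x|) :=
      integral_mono ifh (ifg.add igh) fun x => abs_sub_le _ _ _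
    rwa [integral_add ifg igh] at hle
  have tri2 : (∫ x, |f x - g x|) ≤ (∫ x, |f x - h x|) + (∫ x, |g x - h x|) := by
    have hle : (∫ x, |f x - g x|) ≤ ∫ x, (|f x - h x| + |g x - h x|) := by
      refine integral_mono ifg (ifh.add igh) fun x => ?_
      have := abs_sub_le (f x) (h x) (g x)
      rwa [abs_sub_comm (h x) (g x)] at this
    rwa [integral_add ifh igh] at hle
  have tri3 : (∫ x, |g x - h x|) ≤ (∫ x, |f x - g x|) + (∫ x, |f x - h x|) := by
    have hle : (∫ x, |g x - h x|) ≤ ∫ x, (|f x - g x| + |f x - h x|) := by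
      refine integral_mono igh (ifg.add ifh) fun x => ?_
      have := abs_sub_le (g x) (f x) (h x)
      rwa [abs_sub_comm (g x) (f x)] at this
    rwa [integral_add ifg ifh] at hle
  have habs : ∀ (u v : ℝ → ℝ), Integrable u → Integrable v →
      (∫ x, |u x - v x|) ≤ (∫ x, |u x|) + ∫ x, |v x| := by
    intro u v hu hv
    have iu : Integrable (fun x => |u x|) := hu.abs
    have iv : Integrable (fun x => |v x|) := hv.abs
    have iuv : Integrable (fun x => |u x - v x|) := (hu.sub hv).abs
    have hle : (∫ x, |u x - v x|) ≤ ∫ x, (|u x| + |v x|) :=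
      integral_mono iuv (iu.add iv) fun x => myabs _ _
    rwa [integral_add iu iv] at hle
  have hNle : ∀ (u v : ℝ → ℝ), Integrable u → Integrable v →
      (∫ x, |u x|) ≤ (∫ x, |v x|) + ∫ x, |u x - v x| := by
    intro u v hu hv
    have iu : Integrable (fun x => |u x|) := hu.abs
    have iv : Integrable (fun x => |v x|) := hv.abs
    have iuv : Integrable (fun x => |u x - v x|) := (hu.sub hv).abs
    have hle : (∫ x, |u x|) ≤ ∫ x, (|v x| + |u x - v x|) := by
      refine integral_mono iu (iv.add iuv) fun x => ?_
      have := abs_sub_abs_le_abs_sub (u x) (v x)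
      linarith [this]
    rwa [integral_add iv iuv] at hle
  have tbound : ∀ (u v : ℝ → ℝ), Integrable u → Integrable v →
      |(∫ x, u x) - ∫ x, v x| ≤ ∫ x, |u x - v x| := by
    intro u v hu hv
    rw [← integral_sub hu hv]
    simpa [Real.norm_eq_abs] using
      norm_integral_le_integral_norm (μ := volume) (fun x => u x - v x)
  have hNfg := hNle f g hf hg
  have hNgf' := hNle g f hg hf
  have hNgf : (∫ x, |g x|) ≤ (∫ x, |f x|) + ∫ x, |f x - g x| := by
    rwa [eswap g f] at hNgf'
  have hNgh := hNle g h hg hh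
  have hNhg' := hNle h g hh hg
  have hNhg : (∫ x, |h x|) ≤ (∫ x, |g x|) + ∫ x, |g x - h x| := by
    rwa [eswap h g] at hNhg'
  have hta := abs_le.mp (tbound f g hf hg)
  have htb := abs_le.mp (tbound g h hg hh)
  have htc := abs_le.mp (tbound f h hf hh)
  have Hfg2 : 0 < ((∫ x, |f x|) + (∫ x, |g x|) + (∫ x, |f x - g x|)) / 2 := by
    rw [← intM f g hf hg]; exact Hfg
  have Hgh2 : 0 < ((∫ x, |g x|) + (∫ x, |h x|) + (∫ x, |g x - h x|)) / 2 := by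
    rw [← intM g h hg hh]; exact Hgh
  have Hfh2 : 0 < ((∫ x, |f x|) + (∫ x, |h x|) + (∫ x, |f x - h x|)) / 2 := by
    rw [← intM f h hf hh]; exact Hfh
  have comp1 : (∫ x, max (f x - h x) 0) / (∫ x, max |f x| (max |h x| |f x - h x|)) ≤
      (∫ x, max (f x - g x) 0) / (∫ x, max |f x| (max |g x| |f x - g x|)) +
      (∫ x, max (g x - h x) 0) / (∫ x, max |g x| (max |h x| |g x - h x|)) := by
    rw [intPos f h hf hh, intPos f g hf hg, intPos g h hg hh,
      intM f h hf hh, intM f g hf hg, intM g h hg hh]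
    exact keyIneq (∫ x, |f x - g x|) (∫ x, |g x - h x|) (∫ x, |f x - h x|)
      (∫ x, |f x|) (∫ x, |g x|) (∫ x, |h x|)
      ((∫ x, f x) - ∫ x, g x) ((∫ x, g x) - ∫ x, h x) ((∫ x, f x) - ∫ x, h x)
      (by ring) tri1 tri2 tri3 (habs f g hf hg) (habs g h hg hh) (habs f h hf hh)
      hNfg hNgf hNgh hNhg
      (by linarith [hta.1]) hta.2 (by linarith [htb.1]) htb.2 htc.2
      Hfg2 Hgh2 Hfh2
  have Pgf : (∫ x, max (g x - f x) 0) =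
      ((∫ x, |f x - g x|) + ((∫ x, g x) - ∫ x, f x)) / 2 := by
    rw [intPos g f hg hf, eswap g f]
  have Phg : (∫ x, max (h x - g x) 0) =
      ((∫ x, |g x - h x|) + ((∫ x, h x) - ∫ x, g x)) / 2 := by
    rw [intPos h g hh hg, eswap h g]
  have Phf : (∫ x, max (h x - f x) 0) =
      ((∫ x, |f x - h x|) + ((∫ x, h x) - ∫ x, f x)) / 2 := by
    rw [intPos h f hh hf, eswap h f]
  have comp2 : (∫ x, max (h x - f x) 0) / (∫ x, max |f x| (max |h x| |f x - h x|)) ≤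
      (∫ x, max (g x - f x) 0) / (∫ x, max |f x| (max |g x| |f x - g x|)) +
      (∫ x, max (h x - g x) 0) / (∫ x, max |g x| (max |h x| |g x - h x|)) := by
    rw [Phf, Pgf, Phg, intM f h hf hh, intM f g hf hg, intM g h hg hh]
    exact keyIneq (∫ x, |f x - g x|) (∫ x, |g x - h x|) (∫ x, |f x - h x|)
      (∫ x, |f x|) (∫ x, |g x|) (∫ x, |h x|)
      ((∫ x, g x) - ∫ x, f x) ((∫ x, h x) - ∫ x, g x) ((∫ x, h x) - ∫ x, f x)
      (by ring) tri1 tri2 tri3 (habs f g hf hg) (habs g h hg hh) (habs f h hf hh)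
      hNfg hNgf hNgh hNhg
      (by linarith [hta.2]) (by linarith [hta.1]) (by linarith [htb.2]) (by linarith [htb.1])
      (by linarith [htc.1])
      Hfg2 Hgh2 Hfh2
  have e0 : funDN p f h = funD p f h / ∫ x, max |f x| (max |h x| |f x - h x|) := by
    unfold funDN; exact if_pos Hfh
  have e1 : funDN p f g = funD p f g / ∫ x, max |f x| (max |g x| |f x - g x|) := by
    unfold funDN; exact if_pos Hfg
  have e2 : funDN p g h = funD p g h / ∫ x, max |g x| (max |h x| |g x - h x|) := by
    unfold funDN; exact if_pos Hgh
  rw [e0, e1, e2]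
  unfold funD
  exact normDiv p hp _ _ _ _ _ _ _ _ _
    (integral_nonneg fun x => le_max_right _ _) (integral_nonneg fun x => le_max_right _ _)
    (integral_nonneg fun x => le_max_right _ _) (integral_nonneg fun x => le_max_right _ _)
    (integral_nonneg fun x => le_max_right _ _) (integral_nonneg fun x => le_max_right _ _)
    Hfg Hgh Hfh comp1 comp2
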